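/- A morphism of causal-nets is a contraction if and only if it can be written as a composition of finitely many morphisms each of which is an isomorphism or a simple contraction. -/

import Mathlib

open CategoryTheory

namespace CausalNets

/-- Acyclicity condition for raw directed-multigraph data: every directed cycle
has length zero. -/
def NoCycleData (V E : Type) (s t : E → V) : Prop :=
  letI : Quiver V := ⟨fun a b => { e : E // s e = a ∧ t e = b }⟩
  ∀ (v : V) (p : Quiver.Path v v), p.length = 0

/-- A causal-net: a finite acyclic directed multigraph (isolated vertices and
parallel edges allowed). -/
structure CausalNet where
  V : Type
  E : Type
  src : E → V
  tgt : E → V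
  fintypeV : Fintype V
  fintypeE : Fintype E
  acyclic : NoCycleData V E src tgt

attribute [instance] CausalNet.fintypeV CausalNet.fintypeE

instance CausalNet.quiver (G : CausalNet) : Quiver G.V :=
  ⟨fun a b => { e : G.E // G.src e = a ∧ G.tgt e = b }⟩

/-- The category `Cau` of causal-nets: a morphism `G ⟶ H` is a functor between
the path categories `Paths G.V ⥤ Paths H.V`. -/
instance : Category CausalNet where
  Hom G H := Paths G.V ⥤ Paths H.V
  id G := 𝟭 (Paths G.V)
  comp φ ψ := φ ⋙ ψ

variable {G H K : CausalNet}

/-- The action of a morphism of causal-nets on vertices (objects). -/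
def vmap (φ : G ⟶ H) : G.V → H.V := (φ : Paths G.V ⥤ Paths H.V).obj

/-- The action of a morphism of causal-nets on directed paths (morphisms). -/
def pmap (φ : G ⟶ H) {a b : G.V} (p : Quiver.Path a b) :
    Quiver.Path (vmap φ a) (vmap φ b) :=
  (φ : Paths G.V ⥤ Paths H.V).map p

/-- The quiver arrow corresponding to an edge. -/
def edgeHom (G : CausalNet) (e : G.E) : G.src e ⟶ G.tgt e := ⟨e, rfl, rfl⟩

/-- The directed path which is the image of the edge `e` under the morphism `φ`. -/
def edgePath (φ : G ⟶ H) (e : G.E) :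
    Quiver.Path (vmap φ (G.src e)) (vmap φ (G.tgt e)) :=
  pmap φ (Quiver.Hom.toPath (edgeHom G e))

/-- The underlying edge of a quiver arrow. -/
def homEdge {a b : G.V} (f : a ⟶ b) : G.E := Subtype.val f

/-- The list of edges traversed by a directed path. -/
def pathEdges : {a b : G.V} → Quiver.Path a b → List G.E
  | _, _, Quiver.Path.nil => []
  | _, _, Quiver.Path.cons p f => pathEdges p ++ [homEdge f]

/-- The list of vertices visited by a directed path (including endpoints). -/
def pathVertices : {a b : G.V} → Quiver.Path a b → List G.V
  | a, _, Quiver.Path.nil => [a]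
  | _, b, Quiver.Path.cons p _ => pathVertices p ++ [b]

/-- An edge `e` is a contraction of `φ` if `φ(e)` has length `0`. -/
def IsContractionEdge (φ : G ⟶ H) (e : G.E) : Prop := (edgePath φ e).length = 0

/-- An edge `e` is a segment of `φ` if `φ(e)` has length `1`. -/
def IsSegmentEdge (φ : G ⟶ H) (e : G.E) : Prop := (edgePath φ e).length = 1

/-- An edge `e` is a subdivision of `φ` if `φ(e)` has length at least `2`. -/
def IsSubdivisionEdge (φ : G ⟶ H) (e : G.E) : Prop := 2 ≤ (edgePath φ e).length

/-- `φ` maps the edge `e` to the length-one path consisting of the edge `h`. -/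
def MapsToEdge (φ : G ⟶ H) (e : G.E) (h : H.E) : Prop :=
  pathEdges (edgePath φ e) = [h]

/-- A quotient: a morphism with no null-vertex and no null-edge. -/
def IsQuotientMor (φ : G ⟶ H) : Prop :=
  (∀ v : H.V, ∃ w : G.V, vmap φ w = v) ∧ ∀ h : H.E, ∃ e : G.E, MapsToEdge φ e h

/-- A coarse-graining: a quotient with no subdivision. -/
def IsCoarseGraining (φ : G ⟶ H) : Prop :=
  IsQuotientMor φ ∧ ∀ e : G.E, ¬ IsSubdivisionEdge φ e

/-- A vertex-coarse-graining: a coarse-graining with no multiple-edge. -/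
def IsVertexCoarseGraining (φ : G ⟶ H) : Prop :=
  IsCoarseGraining φ ∧
  ∀ (h : H.E) (e₁ e₂ : G.E), MapsToEdge φ e₁ h → MapsToEdge φ e₂ h → e₁ = e₂

/-- An edge-coarse-graining: a coarse-graining with no multiple-vertex and no
contraction. -/
def IsEdgeCoarseGraining (φ : G ⟶ H) : Prop :=
  IsCoarseGraining φ ∧ Function.Injective (vmap φ) ∧ ∀ e : G.E, ¬ IsContractionEdge φ e

/-- A merging: a vertex-coarse-graining with no contraction. -/
def IsMerging (φ : G ⟶ H) : Prop :=
  IsVertexCoarseGraining φ ∧ ∀ e : G.E, ¬ IsContractionEdge φ e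

/-- A fusion: a coarse-graining with no contraction. -/
def IsFusion (φ : G ⟶ H) : Prop :=
  IsCoarseGraining φ ∧ ∀ e : G.E, ¬ IsContractionEdge φ e

/-- An inclusion: a morphism injective on vertices and on directed paths
(an injective-on-objects faithful functor). -/
def IsInclusion (φ : G ⟶ H) : Prop :=
  Function.Injective (vmap φ) ∧
  ∀ (a b : G.V) (p q : Quiver.Path a b), pmap φ p = pmap φ q → p = q

/-- An embedding: an inclusion with no subdivision. -/
def IsEmbedding (φ : G ⟶ H) : Prop :=
  IsInclusion φ ∧ ∀ e : G.E, ¬ IsSubdivisionEdge φ e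

/-- An immersion: an inclusion such that images of distinct subdivision edges
share no edge. -/
def IsImmersion (φ : G ⟶ H) : Prop :=
  IsInclusion φ ∧
  ∀ e₁ e₂ : G.E, e₁ ≠ e₂ → IsSubdivisionEdge φ e₁ → IsSubdivisionEdge φ e₂ →
    ∀ h : H.E, h ∈ pathEdges (edgePath φ e₁) → h ∉ pathEdges (edgePath φ e₂)

/-- The internal vertices of a directed path (all visited vertices except the
two endpoints). -/
def internalVertices {a b : G.V} (p : Quiver.Path a b) : List G.V :=
  ((pathVertices p).dropLast).tail

/-- A strong morphism: all internal vertices of images of subdivision edges are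
null-vertices. -/
def IsStrong (φ : G ⟶ H) : Prop :=
  ∀ e : G.E, IsSubdivisionEdge φ e →
    ∀ v ∈ internalVertices (edgePath φ e), ∀ w : G.V, vmap φ w ≠ v

/-- A vertex-disjoint morphism: images of distinct subdivision edges share no
internal vertex. -/
def IsVertexDisjoint (φ : G ⟶ H) : Prop :=
  ∀ e₁ e₂ : G.E, e₁ ≠ e₂ → IsSubdivisionEdge φ e₁ → IsSubdivisionEdge φ e₂ →
    ∀ v : H.V, v ∈ internalVertices (edgePath φ e₁) → v ∉ internalVertices (edgePath φ e₂)

/-- A topological embedding: a strong vertex-disjoint inclusion. -/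
def IsTopologicalEmbedding (φ : G ⟶ H) : Prop :=
  IsInclusion φ ∧ IsStrong φ ∧ IsVertexDisjoint φ

/-- The edge `e` covers the vertex `v` if `v` occurs on the path `φ(e)`. -/
def Covers (φ : G ⟶ H) (e : G.E) (v : H.V) : Prop :=
  v ∈ pathVertices (edgePath φ e)

/-- An isolated vertex: a vertex incident to no edge. -/
def IsolatedVertex (G : CausalNet) (v : G.V) : Prop :=
  ∀ e : G.E, G.src e ≠ v ∧ G.tgt e ≠ v

/-- A subdivision morphism: a topological embedding such that every non-isolated
vertex of the codomain is covered and every isolated vertex of the codomain is a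
simple-vertex. -/
def IsSubdivisionMor (φ : G ⟶ H) : Prop :=
  IsTopologicalEmbedding φ ∧
  (∀ v : H.V, ¬ IsolatedVertex H v → ∃ e : G.E, Covers φ e v) ∧
  (∀ v : H.V, IsolatedVertex H v → ∃! w : G.V, vmap φ w = v)

theorem mapPath_length {V W : Type} [Quiver V] [Quiver W] (F : V ⥤q W) :
    ∀ {a b : V} (p : Quiver.Path a b), (F.mapPath p).length = p.length := by
  intro a b p
  induction p with
  | nil => rfl
  | cons q f ih =>
      show ((F.mapPath q).cons (F.map f)).length = (q.cons f).length
      rw [Quiver.Path.length_cons, Quiver.Path.length_cons, ih]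

theorem noCycleData_of_map {V₁ E₁ : Type} (s₁ t₁ : E₁ → V₁) (G : CausalNet)
    (f : V₁ → G.V) (g : E₁ → G.E)
    (hs : ∀ e, G.src (g e) = f (s₁ e)) (ht : ∀ e, G.tgt (g e) = f (t₁ e)) :
    NoCycleData V₁ E₁ s₁ t₁ := by
  letI : Quiver V₁ := ⟨fun a b => { e : E₁ // s₁ e = a ∧ t₁ e = b }⟩
  intro v p
  let F : V₁ ⥤q G.V :=
    { obj := f
      map := fun {a b} e =>
        ⟨g (Subtype.val e), by rw [hs, (Subtype.prop e).1], by rw [ht, (Subtype.prop e).2]⟩ }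
  have h := G.acyclic (f v) (F.mapPath p)
  rw [mapPath_length] at h
  exact h

theorem noCycleData_of_lt {V E : Type} [Preorder V] (s t : E → V)
    (hlt : ∀ e, s e < t e) : NoCycleData V E s t := by
  letI : Quiver V := ⟨fun a b => { e : E // s e = a ∧ t e = b }⟩
  have key : ∀ {a b : V} (p : Quiver.Path a b), (a = b ∧ p.length = 0) ∨ a < b := by
    intro a b p
    induction p with
    | nil => exact Or.inl ⟨rfl, rfl⟩
    | cons q f ih =>
        have hcb := hlt (Subtype.val f)
        rw [(Subtype.prop f).1, (Subtype.prop f).2] at hcb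
        rcases ih with ⟨h, _⟩ | h
        · exact Or.inr (by rw [h]; exact hcb)
        · exact Or.inr (lt_trans h hcb)
  intro v p
  rcases key p with ⟨_, h⟩ | h
  · exact h
  · exact absurd h (lt_irrefl v)

/-- The sub-causal-net spanned by a set of vertices and a set of edges. -/
noncomputable def mkSub (G : CausalNet) (Vs : Set G.V) (Es : Set G.E)
    (hs : ∀ e ∈ Es, G.src e ∈ Vs) (ht : ∀ e ∈ Es, G.tgt e ∈ Vs) : CausalNet where
  V := Vs
  E := Es
  src e := ⟨G.src e.1, hs e.1 e.2⟩
  tgt e := ⟨G.tgt e.1, ht e.1 e.2⟩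
  fintypeV := Fintype.ofFinite _
  fintypeE := Fintype.ofFinite _
  acyclic := noCycleData_of_map _ _ G Subtype.val Subtype.val (fun _ => rfl) (fun _ => rfl)

/-- The fiber of a morphism at a vertex `v` of the codomain: the sub-causal-net
of the domain on the vertices mapped to `v` and the edges mapped to the identity
path at `v`. -/
noncomputable def fiber (φ : G ⟶ H) (v : H.V) : CausalNet :=
  mkSub G {w : G.V | vmap φ w = v}
    {e : G.E | IsContractionEdge φ e ∧ vmap φ (G.src e) = v}
    (fun _ he => he.2)
    (fun e he =>
      show vmap φ (G.tgt e) = v from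
        Quiver.Path.eq_of_length_zero (edgePath φ e) he.1 ▸ he.2)

/-- The underlying undirected (simple) graph of a causal-net. -/
def undirected (G : CausalNet) : SimpleGraph G.V where
  Adj v w := v ≠ w ∧ ∃ e : G.E, (G.src e = v ∧ G.tgt e = w) ∨ (G.src e = w ∧ G.tgt e = v)
  symm := by
    constructor
    rintro v w ⟨hne, e, he⟩
    exact ⟨hne.symm, e, he.symm⟩
  loopless := by
    constructor
    intro v h
    exact h.1 rfl

/-- A causal-net is connected if its underlying undirected graph is connected. -/
def Connected (G : CausalNet) : Prop := (undirected G).Connected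

/-- A causal-Tree: a causal-net whose simplification has a tree as underlying
undirected graph.  (Since a causal-net is acyclic, the underlying undirected
graph of its simplification is exactly `undirected G`.) -/
def IsCausalTree (G : CausalNet) : Prop := (undirected G).IsTree

/-- A contraction: a vertex-coarse-graining all of whose fibers are connected. -/
def IsContractionMor (φ : G ⟶ H) : Prop :=
  IsVertexCoarseGraining φ ∧ ∀ v : H.V, Connected (fiber φ v)

/-- A simple contraction: a contraction with exactly one non-trivial fiber, that
fiber consisting of two vertices together with all edges from the first to the
second. -/
def IsSimpleContraction (φ : G ⟶ H) : Prop :=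
  IsContractionMor φ ∧
  ∃ w₁ w₂ : G.V, w₁ ≠ w₂ ∧ vmap φ w₁ = vmap φ w₂ ∧
    (∃ e : G.E, G.src e = w₁ ∧ G.tgt e = w₂) ∧
    (∀ e : G.E, IsContractionEdge φ e ↔ (G.src e = w₁ ∧ G.tgt e = w₂)) ∧
    (∀ u u' : G.V, vmap φ u = vmap φ u' →
      u = u' ∨ ((u = w₁ ∨ u = w₂) ∧ (u' = w₁ ∨ u' = w₂)))

/-- A tree-contraction: a contraction all of whose fibers are causal-Trees. -/
def IsTreeContraction (φ : G ⟶ H) : Prop :=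
  IsContractionMor φ ∧ ∀ v : H.V, IsCausalTree (fiber φ v)

/-- A directed multi-path: a causal-net whose simplification is a directed path. -/
def IsDirectedMultiPath (K : CausalNet) : Prop :=
  ∃ (a b : K.V) (p : Quiver.Path a b),
    (pathVertices p).Nodup ∧ (∀ v : K.V, v ∈ pathVertices p) ∧
    ∀ e : K.E, ∃ h ∈ pathEdges p, K.src e = K.src h ∧ K.tgt e = K.tgt h

/-- A path-contraction: a vertex-coarse-graining all of whose fibers are
directed multi-paths. -/
def IsPathContraction (φ : G ⟶ H) : Prop :=
  IsVertexCoarseGraining φ ∧ ∀ v : H.V, IsDirectedMultiPath (fiber φ v)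

/-- A point: a causal-net with exactly one vertex and no edges. -/
def IsPoint (A : CausalNet) : Prop := (∃ v : A.V, ∀ w : A.V, w = v) ∧ IsEmpty A.E

/-- Reachability: there is a directed path from `a` to `b`. -/
def Reaches (G : CausalNet) (a b : G.V) : Prop := Nonempty (Quiver.Path a b)

/-- A coclique: a set of vertices no two distinct members of which are
comparable under the reachability order. -/
def IsCoclique (G : CausalNet) (S : Set G.V) : Prop :=
  ∀ a ∈ S, ∀ b ∈ S, a ≠ b → ¬ Reaches G a b

/-- A multi-edge: the nonempty set of all edges from one fixed vertex to another. -/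
def IsMultiEdge (G : CausalNet) (s : Set G.E) : Prop :=
  s.Nonempty ∧ ∃ a b : G.V, s = {e : G.E | G.src e = a ∧ G.tgt e = b}

/-- The pair of vertices whose multi-edge is contracted by a simple contraction. -/
def ContractedPair (φ : G ⟶ H) (w₁ w₂ : G.V) : Prop :=
  w₁ ≠ w₂ ∧ vmap φ w₁ = vmap φ w₂ ∧ (∃ e : G.E, G.src e = w₁ ∧ G.tgt e = w₂) ∧
  ∀ e : G.E, IsContractionEdge φ e ↔ (G.src e = w₁ ∧ G.tgt e = w₂)

/-- Two causal-nets are isomorphic in `Cau`. -/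
def IsIsomorphicTo (A B : CausalNet) : Prop := ∃ φ : A ⟶ B, IsIso φ

/-- A simple causal-net: at most one edge between any ordered pair of vertices. -/
def IsSimpleNet (G : CausalNet) : Prop :=
  ∀ e₁ e₂ : G.E, G.src e₁ = G.src e₂ → G.tgt e₁ = G.tgt e₂ → e₁ = e₂

/-- A harmonic causal-net: every fusion out of it is an isomorphism. -/
def Harmonic (G : CausalNet) : Prop :=
  ∀ (H : CausalNet) (φ : G ⟶ H), IsFusion φ → IsIso φ

/-- A hamiltonian path: a directed path visiting every vertex exactly once. -/
def HasHamiltonianPath (G : CausalNet) : Prop :=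
  ∃ (a b : G.V) (p : Quiver.Path a b),
    (pathVertices p).Nodup ∧ ∀ v : G.V, v ∈ pathVertices p

/-- Morphisms which can be written as a composition of finitely many morphisms
each satisfying `P`. -/
inductive IsCompOf (P : ∀ ⦃A B : CausalNet⦄, (A ⟶ B) → Prop) :
    ∀ {A B : CausalNet}, (A ⟶ B) → Prop
  | of {A B : CausalNet} (φ : A ⟶ B) : P φ → IsCompOf P φ
  | comp {A B C : CausalNet} (φ : A ⟶ B) (ψ : B ⟶ C) :
      IsCompOf P φ → IsCompOf P ψ → IsCompOf P (φ ≫ ψ)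

def IsoOrSimpleContraction : ∀ ⦃A B : CausalNet⦄, (A ⟶ B) → Prop :=
  fun _ _ φ => IsIso φ ∨ IsSimpleContraction φ

section Aux

open Quiver

variable {G H K : CausalNet}

theorem length_pathEdges : ∀ {a b : G.V} (p : Quiver.Path a b),
    (pathEdges p).length = p.length
  | _, _, Quiver.Path.nil => by simp [pathEdges]
  | _, _, Quiver.Path.cons p f => by
      simp [pathEdges, Quiver.Path.length_cons, length_pathEdges p]

theorem pathEdges_comp {a b c : G.V} (p : Quiver.Path a b) :
    ∀ (q : Quiver.Path b c), pathEdges (p.comp q) = pathEdges p ++ pathEdges q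
  | Quiver.Path.nil => by simp [Quiver.Path.comp, pathEdges]
  | Quiver.Path.cons q f => by
      simp [Quiver.Path.comp, pathEdges, pathEdges_comp p q]

theorem hom_elim {motive : ∀ {a b : G.V}, (a ⟶ b) → Prop}
    (h : ∀ e : G.E, motive (edgeHom G e)) : ∀ {a b : G.V} (f : a ⟶ b), motive f := by
  rintro a b ⟨e, rfl, rfl⟩
  exact h e

theorem pmap_comp' (φ : G ⟶ H) {a b c : G.V} (p : Quiver.Path a b) (q : Quiver.Path b c) :
    pmap φ (p.comp q) = (pmap φ p).comp (pmap φ q) :=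
  (φ : Paths G.V ⥤ Paths H.V).map_comp p q

theorem pmap_nil (φ : G ⟶ H) (a : G.V) :
    pmap φ (Quiver.Path.nil : Quiver.Path a a) = Quiver.Path.nil :=
  (φ : Paths G.V ⥤ Paths H.V).map_id a

theorem pathEdges_pmap_toPath (φ : G ⟶ H) :
    ∀ {a b : G.V} (f : a ⟶ b),
      pathEdges (pmap φ f.toPath) = pathEdges (edgePath φ (homEdge f)) := by
  apply hom_elim
  intro e
  rfl

end Aux
section Aux2

open Quiver

variable {G H K : CausalNet}

theorem exists_toPath_of_length_one {a b : G.V} (p : Quiver.Path a b) (h : p.length = 1) :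
    ∃ f : a ⟶ b, p = f.toPath := by
  cases p with
  | nil => simp [Quiver.Path.length] at h
  | cons q g =>
    have h0 : q.length = 0 := by
      have := h; simp [Quiver.Path.length_cons] at this; exact this
    have hac := Quiver.Path.eq_of_length_zero q h0
    subst hac
    cases q with
    | nil => exact ⟨g, rfl⟩
    | cons r f => simp [Quiver.Path.length] at h0

theorem pathEdges_toPath {a b : G.V} (f : a ⟶ b) :
    pathEdges f.toPath = [homEdge f] := by
  simp [Quiver.Hom.toPath, pathEdges]

/-- From `MapsToEdge φ e h`, get the hom presentation. -/
theorem MapsToEdge.exists_hom {φ : G ⟶ H} {e : G.E} {h : H.E}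
    (hm : MapsToEdge φ e h) :
    ∃ f : vmap φ (G.src e) ⟶ vmap φ (G.tgt e), edgePath φ e = f.toPath ∧ homEdge f = h := by
  have hlen : (edgePath φ e).length = 1 := by
    rw [← length_pathEdges, hm]; rfl
  obtain ⟨f, hf⟩ := exists_toPath_of_length_one _ hlen
  refine ⟨f, hf, ?_⟩
  have h2 : pathEdges (edgePath φ e) = [homEdge f] := by rw [hf, pathEdges_toPath]
  rw [hm] at h2
  exact (List.cons.injEq _ _ _ _ ▸ h2.symm).1

theorem MapsToEdge.src_eq {φ : G ⟶ H} {e : G.E} {h : H.E} (hm : MapsToEdge φ e h) :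
    vmap φ (G.src e) = H.src h := by
  obtain ⟨f, _, hfe⟩ := hm.exists_hom
  rw [← hfe]
  exact f.2.1.symm

theorem MapsToEdge.tgt_eq {φ : G ⟶ H} {e : G.E} {h : H.E} (hm : MapsToEdge φ e h) :
    vmap φ (G.tgt e) = H.tgt h := by
  obtain ⟨f, _, hfe⟩ := hm.exists_hom
  rw [← hfe]
  exact f.2.2.symm

theorem mapsToEdge_iff_pathEdges {φ : G ⟶ H} {e : G.E} {h : H.E} :
    MapsToEdge φ e h ↔ pathEdges (edgePath φ e) = [h] := Iff.rfl

theorem isContractionEdge_iff_pathEdges {φ : G ⟶ H} {e : G.E} :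
    IsContractionEdge φ e ↔ pathEdges (edgePath φ e) = [] := by
  rw [IsContractionEdge, ← length_pathEdges, List.length_eq_zero_iff]

theorem IsContractionEdge.endpoints_eq {φ : G ⟶ H} {e : G.E} (h : IsContractionEdge φ e) :
    vmap φ (G.src e) = vmap φ (G.tgt e) :=
  Quiver.Path.eq_of_length_zero _ h

theorem vmap_comp_apply (φ : G ⟶ H) (ψ : H ⟶ K) (v : G.V) :
    vmap (φ ≫ ψ) v = vmap ψ (vmap φ v) := rfl

theorem edgePath_comp (φ : G ⟶ H) (ψ : H ⟶ K) (e : G.E) :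
    edgePath (φ ≫ ψ) e = pmap ψ (edgePath φ e) := rfl

theorem pmap_length_zero (φ : G ⟶ H) {a b : G.V} (p : Quiver.Path a b)
    (h : p.length = 0) : (pmap φ p).length = 0 := by
  have hab := Quiver.Path.eq_of_length_zero p h
  subst hab
  cases p with
  | nil => rw [pmap_nil]; rfl
  | cons q f => simp [Quiver.Path.length] at h

theorem comp_contractionEdge_of {φ : G ⟶ H} {ψ : H ⟶ K} {e : G.E}
    (h : IsContractionEdge φ e) : IsContractionEdge (φ ≫ ψ) e := by
  rw [IsContractionEdge, edgePath_comp]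
  exact pmap_length_zero ψ _ h

theorem pathEdges_comp_of_single {φ : G ⟶ H} {ψ : H ⟶ K} {e : G.E} {h : H.E}
    (hm : MapsToEdge φ e h) :
    pathEdges (edgePath (φ ≫ ψ) e) = pathEdges (edgePath ψ h) := by
  obtain ⟨f, hf, hfe⟩ := hm.exists_hom
  rw [edgePath_comp, hf, ← hfe]
  exact pathEdges_pmap_toPath ψ f

theorem pathEdges_comp_of_contraction {φ : G ⟶ H} {ψ : H ⟶ K} {e : G.E}
    (h : IsContractionEdge φ e) : pathEdges (edgePath (φ ≫ ψ) e) = [] := by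
  rw [← List.length_eq_zero_iff, length_pathEdges]
  exact comp_contractionEdge_of h

end Aux2
section Aux3

open Quiver

variable {G H K : CausalNet}

theorem length_pathCast {a b a' b' : G.V} (hu : a = a') (hv : b = b')
    (p : Quiver.Path a b) : (p.cast hu hv).length = p.length := by
  subst hu; subst hv; rw [Quiver.Path.cast_rfl_rfl]

theorem acyclic_len (G : CausalNet) {a : G.V} (p : Quiver.Path a a) : p.length = 0 :=
  G.acyclic a p

theorem Reaches.refl (G : CausalNet) (a : G.V) : Reaches G a a := ⟨Quiver.Path.nil⟩

theorem Reaches.trans {a b c : G.V} (h1 : Reaches G a b) (h2 : Reaches G b c) :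
    Reaches G a c := by
  obtain ⟨p⟩ := h1; obtain ⟨q⟩ := h2; exact ⟨p.comp q⟩

theorem reaches_of_edge (G : CausalNet) (e : G.E) : Reaches G (G.src e) (G.tgt e) :=
  ⟨(edgeHom G e).toPath⟩

theorem Reaches.antisymm {a b : G.V} (h1 : Reaches G a b) (h2 : Reaches G b a) : a = b := by
  obtain ⟨p⟩ := h1; obtain ⟨q⟩ := h2
  have h := acyclic_len G (p.comp q)
  rw [Quiver.Path.length_comp] at h
  exact Quiver.Path.eq_of_length_zero p (Nat.eq_zero_of_add_eq_zero_right h)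

theorem src_ne_tgt (G : CausalNet) (e : G.E) : G.src e ≠ G.tgt e := by
  intro h
  have := acyclic_len G ((edgeHom G e).toPath.cast h rfl)
  rw [length_pathCast] at this
  simp [Quiver.Hom.toPath, Quiver.Path.length] at this

theorem exists_first_edge : ∀ {a b : G.V} (p : Quiver.Path a b), 0 < p.length →
    ∃ f : G.E, G.src f = a ∧ Reaches G (G.tgt f) b := by
  intro a b p
  induction p with
  | nil => intro h; simp [Quiver.Path.length] at h
  | cons q g ih =>
    intro _
    rcases Nat.eq_zero_or_pos q.length with h0 | hpos
    · have hac := Quiver.Path.eq_of_length_zero q h0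
      exact ⟨homEdge g, g.2.1.trans hac.symm, ⟨(Quiver.Path.nil).cast g.2.2.symm rfl⟩⟩
    · obtain ⟨f, hf1, hf2⟩ := ih hpos
      exact ⟨f, hf1, hf2.trans ⟨g.toPath⟩⟩

theorem contraction_edge_of_sandwich (lam : G ⟶ H) (e : G.E) (b : G.V)
    (hr : Reaches G (G.tgt e) b) (hv : vmap lam (G.src e) = vmap lam b) :
    IsContractionEdge lam e := by
  obtain ⟨p⟩ := hr
  have hlen := acyclic_len H ((pmap lam ((edgeHom G e).toPath.comp p)).cast rfl hv.symm)
  rw [length_pathCast, pmap_comp', Quiver.Path.length_comp] at hlen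
  have : (pmap lam (edgeHom G e).toPath).length = 0 :=
    Nat.eq_zero_of_add_eq_zero_right hlen
  exact this

end Aux3
section Aux4

open Quiver

variable {G H K : CausalNet}

theorem reachable_map {W₁ W₂ : Type} {g₁ : SimpleGraph W₁} {g₂ : SimpleGraph W₂}
    (f : W₁ → W₂) (h : ∀ x y, g₁.Adj x y → g₂.Reachable (f x) (f y)) {x y : W₁}
    (hr : g₁.Reachable x y) : g₂.Reachable (f x) (f y) := by
  obtain ⟨w⟩ := hr
  induction w with
  | nil => exact SimpleGraph.Reachable.refl _
  | cons a w ih => exact (h _ _ a).trans ih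

theorem fiber_adj_of (φ : G ⟶ H) {v : H.V} (e : G.E)
    (h1 : IsContractionEdge φ e) (h2 : vmap φ (G.src e) = v)
    (x y : (fiber φ v).V) (hx : G.src e = x.val) (hy : G.tgt e = y.val) :
    (undirected (fiber φ v)).Adj x y := by
  refine ⟨?_, ⟨e, h1, h2⟩, Or.inl ⟨Subtype.ext hx, Subtype.ext hy⟩⟩
  intro hxy
  exact src_ne_tgt G e (by rw [hx, hy, congrArg Subtype.val hxy])

theorem fiber_adj_elim {φ : G ⟶ H} {v : H.V} {x y : (fiber φ v).V}
    (h : (undirected (fiber φ v)).Adj x y) :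
    ∃ e : G.E, IsContractionEdge φ e ∧ vmap φ (G.src e) = v ∧
      ((G.src e = x.val ∧ G.tgt e = y.val) ∨ (G.src e = y.val ∧ G.tgt e = x.val)) := by
  obtain ⟨-, e, hcase⟩ := h
  refine ⟨e.val, e.2.1, e.2.2, ?_⟩
  rcases hcase with ⟨h1, h2⟩ | ⟨h1, h2⟩
  · exact Or.inl ⟨congrArg Subtype.val h1, congrArg Subtype.val h2⟩
  · exact Or.inr ⟨congrArg Subtype.val h1, congrArg Subtype.val h2⟩

/-- vertices of `fiber φ v` reachable from each other transfer into the fiber of a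
composition, provided the fibers of `φ` are connected. -/
theorem samefib (φ : G ⟶ H) (ψ : H ⟶ K) (hφ : ∀ u : H.V, Connected (fiber φ u))
    {v : K.V} {u : H.V} (hu : vmap ψ u = v) (a b : (fiber (φ ≫ ψ) v).V)
    (ha : vmap φ a.val = u) (hb : vmap φ b.val = u) :
    (undirected (fiber (φ ≫ ψ) v)).Reachable a b := by
  have h1 : (undirected (fiber φ u)).Reachable ⟨a.val, ha⟩ ⟨b.val, hb⟩ :=
    (hφ u).preconnected _ _
  have h2 := reachable_map (g₂ := undirected (fiber (φ ≫ ψ) v))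
    (f := fun x : (fiber φ u).V => (⟨x.val, show vmap (φ ≫ ψ) x.val = v by
      rw [vmap_comp_apply, x.2, hu]⟩ : (fiber (φ ≫ ψ) v).V)) ?_ h1
  · exact h2
  · intro x y hxy
    obtain ⟨e, he1, he2, hdir⟩ := fiber_adj_elim hxy
    have hce : IsContractionEdge (φ ≫ ψ) e := comp_contractionEdge_of he1
    have hcv : vmap (φ ≫ ψ) (G.src e) = v := by rw [vmap_comp_apply, he2, hu]
    rcases hdir with ⟨h1', h2'⟩ | ⟨h1', h2'⟩
    · exact (fiber_adj_of (φ ≫ ψ) e hce hcv _ _ h1' h2').reachable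
    · exact ((fiber_adj_of (φ ≫ ψ) e hce hcv _ _ h1' h2').symm).reachable

theorem lift_reachable (φ : G ⟶ H) (ψ : H ⟶ K) (hφ : ∀ u : H.V, Connected (fiber φ u))
    (hq : ∀ h : H.E, ∃ e : G.E, MapsToEdge φ e h) (v : K.V)
    {x y : (fiber ψ v).V} (hr : (undirected (fiber ψ v)).Reachable x y) :
    ∀ (a b : (fiber (φ ≫ ψ) v).V), vmap φ a.val = x.val → vmap φ b.val = y.val →
      (undirected (fiber (φ ≫ ψ) v)).Reachable a b := by
  obtain ⟨w⟩ := hr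
  induction w with
  | @nil c =>
    intro a b ha hb
    exact samefib φ ψ hφ c.2 a b ha hb
  | @cons x' z' y' adj w ih =>
    intro a b ha hb
    obtain ⟨e', he1, he2, hdir⟩ := fiber_adj_elim adj
    obtain ⟨e, hme⟩ := hq e'
    have hce : IsContractionEdge (φ ≫ ψ) e := by
      rw [isContractionEdge_iff_pathEdges, pathEdges_comp_of_single hme]
      exact isContractionEdge_iff_pathEdges.mp he1
    have he2' : vmap ψ (H.tgt e') = v := by
      rw [← he1.endpoints_eq, he2]
    have hsv : vmap (φ ≫ ψ) (G.src e) = v := by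
      rw [vmap_comp_apply, hme.src_eq, he2]
    have htv : vmap (φ ≫ ψ) (G.tgt e) = v := by
      rw [vmap_comp_apply, hme.tgt_eq, he2']
    have hadj := fiber_adj_of (φ ≫ ψ) e hce hsv ⟨G.src e, hsv⟩ ⟨G.tgt e, htv⟩ rfl rfl
    rcases hdir with ⟨h1', h2'⟩ | ⟨h1', h2'⟩
    · -- src e' = x'.val, tgt e' = z'.val
      have r1 : (undirected (fiber (φ ≫ ψ) v)).Reachable a ⟨G.src e, hsv⟩ :=
        samefib φ ψ hφ (u := x'.val) x'.2 a _ ha (by rw [hme.src_eq, h1'])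
      have r2 := ih ⟨G.tgt e, htv⟩ b (by rw [hme.tgt_eq, h2']) hb
      exact r1.trans (hadj.reachable.trans r2)
    · -- src e' = z'.val, tgt e' = x'.val
      have r1 : (undirected (fiber (φ ≫ ψ) v)).Reachable a ⟨G.tgt e, htv⟩ :=
        samefib φ ψ hφ (u := x'.val) x'.2 a _ ha (by rw [hme.tgt_eq, h2'])
      have r2 := ih ⟨G.src e, hsv⟩ b (by rw [hme.src_eq, h1']) hb
      exact r1.trans (hadj.symm.reachable.trans r2)

end Aux4
section Aux5

open Quiver

variable {G H K : CausalNet}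

theorem edgePath_len_le_one {φ : G ⟶ H} (hns : ∀ e : G.E, ¬ IsSubdivisionEdge φ e)
    (e : G.E) : (edgePath φ e).length ≤ 1 :=
  Nat.lt_succ_iff.mp (Nat.not_le.mp (hns e))

/-- If `φ` is not subdividing `e`, then either `e` is contracted or maps to a single edge. -/
theorem edge_dichotomy {φ : G ⟶ H} (hns : ∀ e : G.E, ¬ IsSubdivisionEdge φ e) (e : G.E) :
    IsContractionEdge φ e ∨ ∃ h : H.E, MapsToEdge φ e h := by
  rcases Nat.le_one_iff_eq_zero_or_eq_one.mp (edgePath_len_le_one hns e) with h0 | h1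
  · exact Or.inl h0
  · obtain ⟨f, hf⟩ := exists_toPath_of_length_one _ h1
    exact Or.inr ⟨homEdge f, by rw [mapsToEdge_iff_pathEdges, hf, pathEdges_toPath]⟩

theorem comp_contractionMor {φ : G ⟶ H} {ψ : H ⟶ K}
    (hφ : IsContractionMor φ) (hψ : IsContractionMor ψ) : IsContractionMor (φ ≫ ψ) := by
  obtain ⟨⟨⟨⟨hvφ, heφ⟩, hnsφ⟩, hmφ⟩, hfφ⟩ := hφ
  obtain ⟨⟨⟨⟨hvψ, heψ⟩, hnsψ⟩, hmψ⟩, hfψ⟩ := hψ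
  refine ⟨⟨⟨⟨?_, ?_⟩, ?_⟩, ?_⟩, ?_⟩
  · intro v
    obtain ⟨u, hu⟩ := hvψ v
    obtain ⟨w, hw⟩ := hvφ u
    exact ⟨w, by rw [vmap_comp_apply, hw, hu]⟩
  · intro k
    obtain ⟨h, hh⟩ := heψ k
    obtain ⟨e, he⟩ := heφ h
    exact ⟨e, by rw [mapsToEdge_iff_pathEdges, pathEdges_comp_of_single he]; exact hh⟩
  · intro e hsub
    rcases edge_dichotomy hnsφ e with hc | ⟨h, hm⟩
    · rw [IsSubdivisionEdge, ← length_pathEdges, pathEdges_comp_of_contraction hc] at hsub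
      simp at hsub
    · rw [IsSubdivisionEdge, ← length_pathEdges, pathEdges_comp_of_single hm,
        length_pathEdges] at hsub
      exact hnsψ h hsub
  · intro k e₁ e₂ h1 h2
    rcases edge_dichotomy hnsφ e₁ with hc | ⟨h₁', hm₁⟩
    · rw [mapsToEdge_iff_pathEdges, pathEdges_comp_of_contraction hc] at h1; simp at h1
    rcases edge_dichotomy hnsφ e₂ with hc | ⟨h₂', hm₂⟩
    · rw [mapsToEdge_iff_pathEdges, pathEdges_comp_of_contraction hc] at h2; simp at h2
    have hm1' : MapsToEdge ψ h₁' k := by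
      rw [mapsToEdge_iff_pathEdges, ← pathEdges_comp_of_single hm₁]; exact h1
    have hm2' : MapsToEdge ψ h₂' k := by
      rw [mapsToEdge_iff_pathEdges, ← pathEdges_comp_of_single hm₂]; exact h2
    have : h₁' = h₂' := hmψ k _ _ hm1' hm2'
    subst this
    exact hmφ h₁' _ _ hm₁ hm₂
  · intro v
    obtain ⟨u, hu⟩ := hvψ v
    obtain ⟨w, hw⟩ := hvφ u
    haveI : Nonempty ((fiber (φ ≫ ψ) v).V) := ⟨⟨w, show vmap (φ ≫ ψ) w = v by rw [vmap_comp_apply, hw, hu]⟩⟩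
    refine SimpleGraph.Connected.mk ?_
    · intro a b
      have ha : vmap ψ (vmap φ a.val) = v := a.2
      have hb : vmap ψ (vmap φ b.val) = v := b.2
      have hr : (undirected (fiber ψ v)).Reachable ⟨vmap φ a.val, ha⟩ ⟨vmap φ b.val, hb⟩ :=
        (hfψ v).preconnected _ _
      exact lift_reachable φ ψ hfφ heφ v hr a b rfl rfl

theorem cancel_contractionMor {φ : G ⟶ H} {ψ : H ⟶ K}
    (hφ : IsCoarseGraining φ) (hc : IsContractionMor (φ ≫ ψ)) : IsContractionMor ψ := by
  obtain ⟨⟨hvφ, heφ⟩, hnsφ⟩ := hφ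
  obtain ⟨⟨⟨⟨hvc, hec⟩, hnsc⟩, hmc⟩, hfc⟩ := hc
  have liftE : ∀ k : K.E, ∃ (e : G.E) (h : H.E), MapsToEdge φ e h ∧ MapsToEdge ψ h k := by
    intro k
    obtain ⟨e, he⟩ := hec k
    rcases edge_dichotomy hnsφ e with hcon | ⟨h, hm⟩
    · rw [mapsToEdge_iff_pathEdges, pathEdges_comp_of_contraction hcon] at he; simp at he
    · refine ⟨e, h, hm, ?_⟩
      rw [mapsToEdge_iff_pathEdges, ← pathEdges_comp_of_single hm]; exact he
  refine ⟨⟨⟨⟨?_, ?_⟩, ?_⟩, ?_⟩, ?_⟩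
  · intro v
    obtain ⟨w, hw⟩ := hvc v
    exact ⟨vmap φ w, by rw [← vmap_comp_apply, hw]⟩
  · intro k
    obtain ⟨e, h, _, hm2⟩ := liftE k
    exact ⟨h, hm2⟩
  · intro h hsub
    obtain ⟨e, he⟩ := heφ h
    rw [IsSubdivisionEdge, ← length_pathEdges, ← pathEdges_comp_of_single he,
      length_pathEdges] at hsub
    exact hnsc e hsub
  · intro k h₁ h₂ hm1 hm2
    obtain ⟨e₁, he₁⟩ := heφ h₁
    obtain ⟨e₂, he₂⟩ := heφ h₂
    have c1 : MapsToEdge (φ ≫ ψ) e₁ k := by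
      rw [mapsToEdge_iff_pathEdges, pathEdges_comp_of_single he₁]; exact hm1
    have c2 : MapsToEdge (φ ≫ ψ) e₂ k := by
      rw [mapsToEdge_iff_pathEdges, pathEdges_comp_of_single he₂]; exact hm2
    have : e₁ = e₂ := hmc k _ _ c1 c2
    subst this
    have : [h₁] = [h₂] := by rw [← he₁, ← he₂]
    simpa using this
  · intro v
    obtain ⟨w0, hw0⟩ := hvc v
    haveI : Nonempty ((fiber ψ v).V) := ⟨⟨vmap φ w0, show vmap ψ (vmap φ w0) = v by rw [← vmap_comp_apply, hw0]⟩⟩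
    refine SimpleGraph.Connected.mk ?_
    · intro x y
      obtain ⟨w, hw⟩ := hvφ x.val
      obtain ⟨w', hw'⟩ := hvφ y.val
      have hwv : vmap (φ ≫ ψ) w = v := by rw [vmap_comp_apply, hw]; exact x.2
      have hwv' : vmap (φ ≫ ψ) w' = v := by rw [vmap_comp_apply, hw']; exact y.2
      have hr := hfc v |>.preconnected ⟨w, hwv⟩ ⟨w', hwv'⟩
      have := reachable_map
        (g₂ := undirected (fiber ψ v))
        (f := fun a : (fiber (φ ≫ ψ) v).V =>
          (⟨vmap φ a.val, show vmap ψ (vmap φ a.val) = v from a.2⟩ : (fiber ψ v).V)) ?_ hr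
      · have ex : x = (⟨vmap φ w, show vmap ψ (vmap φ w) = v from hwv⟩ : (fiber ψ v).V) :=
          (Subtype.ext hw).symm
        have ey : y = (⟨vmap φ w', show vmap ψ (vmap φ w') = v from hwv'⟩ : (fiber ψ v).V) :=
          (Subtype.ext hw').symm
        rw [ex, ey]
        exact this
      · intro a c hac
        obtain ⟨e, hce, hcv, hdir⟩ := fiber_adj_elim hac
        rcases edge_dichotomy hnsφ e with hcon | ⟨h, hm⟩
        · have heq : vmap φ (G.src e) = vmap φ (G.tgt e) := hcon.endpoints_eq
          have : vmap φ a.val = vmap φ c.val := by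
            rcases hdir with ⟨h1, h2⟩ | ⟨h1, h2⟩
            · rw [← h1, ← h2, heq]
            · rw [← h1, ← h2, heq]
          have heq2 : (⟨vmap φ a.val, show vmap ψ (vmap φ a.val) = v from a.2⟩ : (fiber ψ v).V)
              = ⟨vmap φ c.val, show vmap ψ (vmap φ c.val) = v from c.2⟩ := Subtype.ext this
          show (undirected (fiber ψ v)).Reachable
            ⟨vmap φ a.val, show vmap ψ (vmap φ a.val) = v from a.2⟩
            ⟨vmap φ c.val, show vmap ψ (vmap φ c.val) = v from c.2⟩
          rw [heq2]
          exact SimpleGraph.Reachable.refl _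
        · have hch : IsContractionEdge ψ h := by
            rw [isContractionEdge_iff_pathEdges, ← pathEdges_comp_of_single hm]
            exact isContractionEdge_iff_pathEdges.mp hce
          have hhv : vmap ψ (H.src h) = v := by
            rw [← hm.src_eq, ← vmap_comp_apply]; exact hcv
          rcases hdir with ⟨h1, h2⟩ | ⟨h1, h2⟩
          · exact (fiber_adj_of ψ h hch hhv _ _ (by rw [← hm.src_eq, h1])
              (by rw [← hm.tgt_eq, h2])).reachable
          · exact ((fiber_adj_of ψ h hch hhv _ _ (by rw [← hm.src_eq, h1])
              (by rw [← hm.tgt_eq, h2])).symm).reachable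

end Aux5
section Aux6

open Quiver

variable {G H K : CausalNet}

/-- A vertex of `G` viewed as an object of the path category. -/
abbrev pobj {G : CausalNet} (v : G.V) : Paths G.V := v

/-- An edge hom of `G` viewed as a morphism of the path category. -/
abbrev phom {G : CausalNet} (e : G.E) : pobj (G.src e) ⟶ pobj (G.tgt e) :=
  (edgeHom G e).toPath

theorem toPath_conj_eq {a b : G.V} (e e' : G.E) (he : e = e')
    (h1 : pobj a = pobj (G.src e)) (h2 : pobj (G.tgt e) = pobj b)
    (h1' : pobj a = pobj (G.src e')) (h2' : pobj (G.tgt e') = pobj b) :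
    (eqToHom h1 ≫ phom e ≫ eqToHom h2 : pobj a ⟶ pobj b) =
      eqToHom h1' ≫ phom e' ≫ eqToHom h2' := by
  subst he; rfl

theorem toPath_conj_eq2 {a b c d : G.V} (e e' : G.E) (he : e = e')
    (h0 : pobj a = pobj c) (h1 : pobj c = pobj (G.src e)) (h2 : pobj (G.tgt e) = pobj d)
    (h3 : pobj d = pobj b)
    (h1' : pobj a = pobj (G.src e')) (h2' : pobj (G.tgt e') = pobj b) :
    (eqToHom h0 ≫ eqToHom h1 ≫ phom e ≫ eqToHom h2 ≫ eqToHom h3 : pobj a ⟶ pobj b) =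
      eqToHom h1' ≫ phom e' ≫ eqToHom h2' := by
  subst he; simp

theorem toPath_conj_eq3 {a b c d : G.V} (e e' : G.E) (he : e = e')
    (h0 : pobj a = pobj c) (h1 : pobj c = pobj (G.src e)) (h2 : pobj (G.tgt e) = pobj d)
    (h3 : pobj d = pobj b)
    (h1' : pobj a = pobj (G.src e')) (h2' : pobj (G.tgt e') = pobj b) :
    (eqToHom h0 ≫ (eqToHom h1 ≫ phom e ≫ eqToHom h2) ≫ eqToHom h3 : pobj a ⟶ pobj b) =
      eqToHom h1' ≫ phom e' ≫ eqToHom h2' := by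
  subst he; simp

theorem eqToHom_eq_three {C : Type*} [Category C] {W X Y Z : C} (p : W = Z) (q : W = X)
    (r : X = Y) (s : Y = Z) : eqToHom p = eqToHom q ≫ eqToHom r ≫ eqToHom s := by
  subst q r s; simp

theorem conj_path_eq {C : Type*} [Category C] {a c a' b' d b : C} (p : a' ⟶ b') (h0 : a = c)
    (h1 : c = a') (h2 : b' = d) (h3 : d = b) (h1' : a = a') (h2' : b' = b) :
    eqToHom h0 ≫ (eqToHom h1 ≫ p ≫ eqToHom h2) ≫ eqToHom h3 = eqToHom h1' ≫ p ≫ eqToHom h2' := by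
  simp

theorem toPath_eq_conj {a b : G.V} (f : a ⟶ b) :
    (f.toPath : pobj a ⟶ pobj b) =
      eqToHom (show pobj a = pobj (G.src (homEdge f)) from f.2.1.symm) ≫ phom (homEdge f) ≫
        eqToHom (show pobj (G.tgt (homEdge f)) = pobj b from f.2.2) := by
  induction f using hom_elim with
  | h e =>
    rfl

theorem length_le_pmap (ψ : H ⟶ K) (hψ : ∀ h : H.E, 1 ≤ (edgePath ψ h).length) :
    ∀ {a b : H.V} (p : Quiver.Path a b), p.length ≤ (pmap ψ p).length := by
  intro a b p
  induction p with
  | nil => simp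
  | cons q f ih =>
    have hc : (q.cons f) = q.comp f.toPath := rfl
    rw [hc, pmap_comp', Quiver.Path.length_comp, Quiver.Path.length_comp]
    have h1 : 1 ≤ (pmap ψ f.toPath).length := by
      rw [← length_pathEdges, pathEdges_pmap_toPath, length_pathEdges]
      exact hψ (homEdge f)
    have h2 : f.toPath.length = 1 := rfl
    omega

theorem pathEdges_comp_functor (φ ψ : G ⟶ H) (h : φ = ψ) (e : G.E) :
    pathEdges (edgePath φ e) = pathEdges (edgePath ψ e) := by
  subst h; rfl

theorem iso_isContractionMor (φ : G ⟶ H) (hiso : IsIso φ) : IsContractionMor φ := by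
  obtain ⟨ψ, hl, hr⟩ := hiso.out
  have vψφ : ∀ v : G.V, vmap ψ (vmap φ v) = v := fun v => Functor.congr_obj hl v
  have vφψ : ∀ v : H.V, vmap φ (vmap ψ v) = v := fun v => Functor.congr_obj hr v
  have pe1 : ∀ e : G.E, pathEdges (edgePath (φ ≫ ψ) e) = [e] := by
    intro e
    rw [pathEdges_comp_functor _ _ hl e]
    exact pathEdges_toPath (edgeHom G e)
  have pe2 : ∀ h : H.E, pathEdges (edgePath (ψ ≫ φ) h) = [h] := by
    intro h
    rw [pathEdges_comp_functor _ _ hr h]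
    exact pathEdges_toPath (edgeHom H h)
  have lenψ : ∀ h : H.E, 1 ≤ (edgePath ψ h).length := by
    intro h
    by_contra hn
    have h0 : IsContractionEdge ψ h := Nat.lt_one_iff.mp (Nat.not_le.mp hn)
    have := pathEdges_comp_of_contraction (ψ := φ) h0
    rw [pe2 h] at this
    simp at this
  have lenφ : ∀ e : G.E, (edgePath φ e).length = 1 := by
    intro e
    have hge : 1 ≤ (edgePath φ e).length := by
      by_contra hn
      have h0 : IsContractionEdge φ e := Nat.lt_one_iff.mp (Nat.not_le.mp hn)
      have := pathEdges_comp_of_contraction (ψ := ψ) h0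
      rw [pe1 e] at this
      simp at this
    have hle : (edgePath φ e).length ≤ 1 := by
      have h1 := length_le_pmap ψ lenψ (edgePath φ e)
      have h2 : (pmap ψ (edgePath φ e)).length = 1 := by
        rw [← length_pathEdges, ← edgePath_comp]
        exact congrArg List.length (pe1 e)
      omega
    omega
  have vinj : Function.Injective (vmap φ) := by
    intro u u' h
    rw [← vψφ u, ← vψφ u', h]
  refine ⟨⟨⟨⟨?_, ?_⟩, ?_⟩, ?_⟩, ?_⟩
  · intro v; exact ⟨vmap ψ v, vφψ v⟩
  · intro h
    obtain ⟨f, hf⟩ := exists_toPath_of_length_one _ (by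
      have := lenψ h
      have h1 := length_le_pmap φ (fun e => le_of_eq (lenφ e).symm) (edgePath ψ h)
      have h2 : (pmap φ (edgePath ψ h)).length = 1 := by
        rw [← length_pathEdges, ← edgePath_comp]
        exact congrArg List.length (pe2 h)
      omega : (edgePath ψ h).length = 1)
    refine ⟨homEdge f, ?_⟩
    have hm : MapsToEdge ψ h (homEdge f) := by
      rw [mapsToEdge_iff_pathEdges, hf, pathEdges_toPath]
    rw [mapsToEdge_iff_pathEdges, ← pathEdges_comp_of_single hm]
    exact pe2 h
  · intro e hsub
    rw [IsSubdivisionEdge, lenφ e] at hsub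
    omega
  · intro h e₁ e₂ hm1 hm2
    have c1 := pathEdges_comp_of_single (ψ := ψ) hm1
    have c2 := pathEdges_comp_of_single (ψ := ψ) hm2
    rw [pe1 e₁] at c1
    rw [pe1 e₂] at c2
    have : [e₁] = [e₂] := by rw [c1, c2]
    simpa using this
  · intro v
    haveI : Nonempty ((fiber φ v).V) := ⟨⟨vmap ψ v, vφψ v⟩⟩
    refine SimpleGraph.Connected.mk ?_
    intro x y
    have : x = y := Subtype.ext (vinj (x.2.trans y.2.symm))
    rw [this]

end Aux6
section Aux7

open Quiver

variable {G H K : CausalNet}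

theorem reachable_eq {W : Type} {g : SimpleGraph W} (h : ∀ x y, ¬ g.Adj x y) {x y : W}
    (hr : g.Reachable x y) : x = y := by
  obtain ⟨w⟩ := hr
  induction w with
  | nil => rfl
  | cons a _ _ => exact absurd a (h _ _)

theorem isIso_of_no_contraction (lam : G ⟶ H) (hc : IsContractionMor lam)
    (hnc : ∀ e : G.E, ¬ IsContractionEdge lam e) : IsIso lam := by
  obtain ⟨⟨⟨⟨hv, he⟩, hns⟩, hm⟩, hf⟩ := hc
  have vinj : Function.Injective (vmap lam) := by
    intro u u' huu
    have r := (hf (vmap lam u)).preconnected ⟨u, rfl⟩ ⟨u', huu.symm⟩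
    have := reachable_eq (fun x y hxy => by
      obtain ⟨e, he1, -, -⟩ := fiber_adj_elim hxy
      exact hnc e he1) r
    exact congrArg Subtype.val this
  have seg : ∀ e : G.E, ∃ h, MapsToEdge lam e h :=
    fun e => (edge_dichotomy hns e).resolve_left (hnc e)
  choose F hF using seg
  have Finj : Function.Injective F :=
    fun e₁ e₂ h12 => hm (F e₁) e₁ e₂ (hF e₁) (h12 ▸ hF e₂)
  have Fsurj : Function.Surjective F := by
    intro h
    obtain ⟨e, hme⟩ := he h
    refine ⟨e, ?_⟩
    have h1 : [F e] = [h] := ((hF e).symm.trans hme : ([F e] : List H.E) = [h])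
    simpa using h1
  let vinv : H.V → G.V := fun v => (hv v).choose
  have vright : ∀ v, vmap lam (vinv v) = v := fun v => (hv v).choose_spec
  have vleft : ∀ u, vinv (vmap lam u) = u := fun u => vinj (by rw [vright])
  let Einv : H.E → G.E := fun h => (Fsurj h).choose
  have Eright : ∀ h, F (Einv h) = h := fun h => (Fsurj h).choose_spec
  have Eleft : ∀ e, Einv (F e) = e := fun e => Finj (by rw [Eright])
  have hsrc : ∀ e, vmap lam (G.src e) = H.src (F e) := fun e => (hF e).src_eq
  have htgt : ∀ e, vmap lam (G.tgt e) = H.tgt (F e) := fun e => (hF e).tgt_eq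
  have E1 : ∀ {a b : H.V} (g : a ⟶ b), pobj (vinv a) = pobj (G.src (Einv (homEdge g))) := by
    intro a b g
    exact vinj (by rw [vright, hsrc, Eright]; exact g.2.1.symm)
  have E2 : ∀ {a b : H.V} (g : a ⟶ b), pobj (G.tgt (Einv (homEdge g))) = pobj (vinv b) := by
    intro a b g
    exact vinj (by rw [vright, htgt, Eright]; exact g.2.2)
  let Φ : H.V ⥤q Paths G.V :=
    { obj := fun v => pobj (vinv v)
      map := fun {a b} g => eqToHom (E1 g) ≫ phom (Einv (homEdge g)) ≫ eqToHom (E2 g) }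
  let ψ : H ⟶ G := Paths.lift Φ
  have hl : lam ≫ ψ = 𝟙 G := by
    apply Paths.ext_functor
    case h_obj => funext v; exact vleft v
    intro a b f
    induction f using hom_elim with
    | h e =>
      obtain ⟨f', hfp, hfe⟩ := (hF e).exists_hom
      have key : Einv (homEdge (edgeHom H (homEdge f'))) = e := by
        show Einv (homEdge f') = e
        rw [hfe]; exact Eleft e
      show ψ.map (edgePath lam e : pobj (vmap lam (G.src e)) ⟶ pobj (vmap lam (G.tgt e))) = _
      erw [hfp, toPath_eq_conj f', Functor.map_comp, Functor.map_comp, eqToHom_map, eqToHom_map,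
        Paths.lift_toPath]
      show eqToHom _ ≫ (eqToHom _ ≫ phom (Einv (homEdge (edgeHom H (homEdge f')))) ≫ eqToHom _)
          ≫ eqToHom _ = _
      simp only [Category.assoc, eqToHom_trans, eqToHom_trans_assoc, Functor.id_map]
      exact toPath_conj_eq2 _ _ key _ _ _ _ _ _
  have hr : ψ ≫ lam = 𝟙 H := by
    apply Paths.ext_functor
    case h_obj => funext v; exact vright v
    intro a b f
    induction f using hom_elim with
    | h h =>
      obtain ⟨f'', hfp, hfe⟩ := (hF (Einv (homEdge (edgeHom H h)))).exists_hom
      have key : homEdge f'' = h := by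
        rw [hfe]
        show F (Einv h) = h
        exact Eright h
      show lam.map (ψ.map (phom h)) = _
      rw [show ψ.map (phom h) = Φ.map (edgeHom H h) from Paths.lift_toPath Φ (edgeHom H h)]
      show lam.map ((eqToHom (E1 (edgeHom H h)) ≫ phom (Einv (homEdge (edgeHom H h))) ≫
        eqToHom (E2 (edgeHom H h)) : pobj (vinv (H.src h)) ⟶ pobj (vinv (H.tgt h)))) = _
      rw [Functor.map_comp, Functor.map_comp, eqToHom_map, eqToHom_map]
      rw [show lam.map (phom (Einv (homEdge (edgeHom H h)))) =
        edgePath lam (Einv (homEdge (edgeHom H h))) from rfl]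
      rw [hfp, toPath_eq_conj f'']
      exact toPath_conj_eq3 _ _ key _ _ _ _ _ _
  exact ⟨⟨ψ, hl, hr⟩⟩

end Aux7
section Contr

open Quiver Classical

variable (G : CausalNet) (e₀ : G.E)

/-- The multi-edge being contracted. -/
def IsMultiE (e : G.E) : Prop := G.src e = G.src e₀ ∧ G.tgt e = G.tgt e₀

/-- Vertices of the contracted net. -/
abbrev cV : Type := {v : G.V // v ≠ G.tgt e₀}

/-- Projection onto the vertices of the contracted net. -/
noncomputable def cπ (v : G.V) : cV G e₀ :=
  if h : v = G.tgt e₀ then ⟨G.src e₀, src_ne_tgt G e₀⟩ else ⟨v, h⟩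

/-- Edges of the contracted net. -/
abbrev cE : Type := {e : G.E // ¬ IsMultiE G e₀ e}

/-- The betweenness condition ensuring acyclicity of the contracted net. -/
def BetCond : Prop :=
  ∀ x : G.V, Reaches G (G.src e₀) x → Reaches G x (G.tgt e₀) →
    x = G.src e₀ ∨ x = G.tgt e₀

theorem cπ_self (v : G.V) (h : v ≠ G.tgt e₀) : cπ G e₀ v = ⟨v, h⟩ := dif_neg h

theorem cπ_tgt : cπ G e₀ (G.tgt e₀) = ⟨G.src e₀, src_ne_tgt G e₀⟩ := dif_pos rfl

theorem cπ_val_eq_or (v : G.V) :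
    ((cπ G e₀ v).val = v) ∨ (v = G.tgt e₀ ∧ (cπ G e₀ v).val = G.src e₀) := by
  by_cases h : v = G.tgt e₀
  · subst h; rw [cπ_tgt]; exact Or.inr ⟨rfl, rfl⟩
  · rw [cπ_self G e₀ v h]; exact Or.inl rfl

/-- The contracted causal-net. -/
noncomputable def cNet (hbet : BetCond G e₀) : CausalNet where
  V := cV G e₀
  E := cE G e₀
  src e := cπ G e₀ (G.src e.val)
  tgt e := cπ G e₀ (G.tgt e.val)
  fintypeV := Fintype.ofFinite _
  fintypeE := Fintype.ofFinite _
  acyclic := by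
    set w₁ := G.src e₀ with hw₁
    set w₂ := G.tgt e₀ with hw₂
    have hw : w₁ ≠ w₂ := src_ne_tgt G e₀
    have hre : Reaches G w₁ w₂ := reaches_of_edge G e₀
    letI : Preorder (cV G e₀) :=
      { le := fun a b => Reaches G a.val b.val ∨ (Reaches G a.val w₂ ∧ Reaches G w₁ b.val)
        le_refl := fun a => Or.inl (Reaches.refl G a.val)
        le_trans := by
          rintro a b c (hab | ⟨hab1, hab2⟩) (hbc | ⟨hbc1, hbc2⟩)
          · exact Or.inl (hab.trans hbc)
          · exact Or.inr ⟨hab.trans hbc1, hbc2⟩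
          · exact Or.inr ⟨hab1, hab2.trans hbc⟩
          · exact Or.inr ⟨hab1, hbc2⟩ }
    apply noCycleData_of_lt
    intro e
    rcases e with ⟨e, hne⟩
    rw [lt_iff_le_not_ge]
    have hst : G.src e ≠ G.tgt e := src_ne_tgt G e
    by_cases ha : G.src e = w₂ <;> by_cases hb : G.tgt e = w₂
    · exact absurd (ha.trans hb.symm) hst
    · -- src = w₂, tgt ≠ w₂
      rw [show cπ G e₀ (G.src e) = ⟨w₁, hw⟩ by rw [ha]; exact cπ_tgt G e₀,
        cπ_self G e₀ _ hb]
      have hr2b : Reaches G w₂ (G.tgt e) := ha ▸ reaches_of_edge G e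
      constructor
      · exact Or.inl (hre.trans hr2b)
      · rintro (hcyc | ⟨h1, h2⟩)
        · exact hb (Reaches.antisymm (hcyc.trans hre) hr2b)
        · exact hb (Reaches.antisymm h1 hr2b)
    · -- src ≠ w₂, tgt = w₂
      rw [cπ_self G e₀ _ ha, show cπ G e₀ (G.tgt e) = ⟨w₁, hw⟩ by rw [hb]; exact cπ_tgt G e₀]
      have hra2 : Reaches G (G.src e) w₂ := hb ▸ reaches_of_edge G e
      constructor
      · exact Or.inr ⟨hra2, Reaches.refl G w₁⟩
      · have key : Reaches G w₁ (G.src e) → False := by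
          intro h2
          rcases hbet _ h2 hra2 with h | h
          · exact hne ⟨h, hb⟩
          · exact ha h
        rintro (hcyc | ⟨h1, h2⟩)
        · exact key hcyc
        · exact key h2
    · -- src ≠ w₂, tgt ≠ w₂
      rw [cπ_self G e₀ _ ha, cπ_self G e₀ _ hb]
      have hrab : Reaches G (G.src e) (G.tgt e) := reaches_of_edge G e
      constructor
      · exact Or.inl hrab
      · rintro (hcyc | ⟨h1, h2⟩)
        · exact hst (Reaches.antisymm hrab hcyc)
        · rcases hbet _ h2 (hrab.trans h1) with h | h
          · rcases hbet _ (h2.trans hrab) h1 with h' | h'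
            · exact hst (h.trans h'.symm)
            · exact hb h'
          · exact ha h

theorem card_cV_lt (hbet : BetCond G e₀) :
    Fintype.card (cNet G e₀ hbet).V < Fintype.card G.V := by
  refine Fintype.card_lt_of_injective_of_notMem (Subtype.val) Subtype.val_injective
    (b := G.tgt e₀) ?_
  rintro ⟨⟨v, hv⟩, h⟩
  exact hv h

end Contr
section Contr2

open Quiver Classical

variable (G : CausalNet) (e₀ : G.E)

theorem length_eqToHom {a b : Paths G.V} (h : a = b) :
    Quiver.Path.length (V := G.V) (eqToHom h) = 0 := by
  subst h; rfl

theorem pathEdges_eqToHom {a b : Paths G.V} (h : a = b) :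
    pathEdges (G := G) (eqToHom h) = [] := by
  subst h
  show pathEdges (G := G) (@Quiver.Path.nil G.V _ a) = []
  exact (fun x : G.V => (by simp [pathEdges] : pathEdges (G := G) (@Quiver.Path.nil G.V _ x) = [])) a

theorem pathEdges_conj {a b a' b' : Paths G.V} (h1 : a' = a) (h2 : b = b')
    (p : a ⟶ b) :
    pathEdges (G := G) (eqToHom h1 ≫ p ≫ eqToHom h2) = pathEdges (G := G) p := by
  subst h1; subst h2
  simp only [eqToHom_refl, Category.id_comp, Category.comp_id]

/-- The prefunctor underlying the simple contraction onto the contracted net. -/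
noncomputable def cσΦ (hbet : BetCond G e₀) : G.V ⥤q Paths (cNet G e₀ hbet).V where
  obj v := pobj (G := cNet G e₀ hbet) (cπ G e₀ v)
  map {a b} f :=
    if h : IsMultiE G e₀ (homEdge f) then
      eqToHom (by
        obtain ⟨h1, h2⟩ := h
        have ha : a = G.src e₀ := f.2.1.symm.trans h1
        have hb : b = G.tgt e₀ := f.2.2.symm.trans h2
        subst ha; subst hb
        show pobj (G := cNet G e₀ hbet) (cπ G e₀ (G.src e₀)) =
          pobj (G := cNet G e₀ hbet) (cπ G e₀ (G.tgt e₀))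
        rw [cπ_tgt, cπ_self G e₀ _ (src_ne_tgt G e₀)])
    else
      eqToHom (congrArg (fun z => pobj (G := cNet G e₀ hbet) (cπ G e₀ z)) f.2.1.symm) ≫
        phom (G := cNet G e₀ hbet) (⟨homEdge f, h⟩ : cE G e₀) ≫
        eqToHom (congrArg (fun z => pobj (G := cNet G e₀ hbet) (cπ G e₀ z)) f.2.2)

/-- The simple contraction onto the contracted net. -/
noncomputable def cσ (hbet : BetCond G e₀) : G ⟶ cNet G e₀ hbet :=
  Paths.lift (cσΦ G e₀ hbet)

theorem cσ_vmap (hbet : BetCond G e₀) (v : G.V) : vmap (cσ G e₀ hbet) v = cπ G e₀ v := rfl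

theorem cσ_edge_multi (hbet : BetCond G e₀) (e : G.E) (h : IsMultiE G e₀ e) :
    IsContractionEdge (cσ G e₀ hbet) e := by
  show (edgePath (cσ G e₀ hbet) e).length = 0
  have : edgePath (cσ G e₀ hbet) e = (cσΦ G e₀ hbet).map (edgeHom G e) :=
    Paths.lift_toPath _ _
  rw [this]
  dsimp only [cσΦ, homEdge, edgeHom]
  erw [dif_pos h]
  exact length_eqToHom (G := cNet G e₀ hbet) _
theorem cσ_edge_not_multi (hbet : BetCond G e₀) (e : G.E) (h : ¬ IsMultiE G e₀ e) :
    MapsToEdge (cσ G e₀ hbet) e ⟨e, h⟩ := by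
  unfold MapsToEdge
  have heq : edgePath (cσ G e₀ hbet) e = (cσΦ G e₀ hbet).map (edgeHom G e) :=
    Paths.lift_toPath _ _
  rw [heq]
  dsimp only [cσΦ, homEdge, edgeHom]
  erw [dif_neg h, pathEdges_conj]
  exact pathEdges_toPath (edgeHom (cNet G e₀ hbet) ⟨e, h⟩)

theorem cπ_eq_iff (w : G.V) (u : cV G e₀) :
    cπ G e₀ w = u ↔ (w = u.val ∨ (u.val = G.src e₀ ∧ w = G.tgt e₀)) := by
  by_cases h : w = G.tgt e₀
  · subst h
    rw [cπ_tgt]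
    constructor
    · rintro rfl; exact Or.inr ⟨rfl, rfl⟩
    · rintro (h1 | ⟨h1, -⟩)
      · exact absurd h1.symm u.2
      · exact Subtype.ext h1.symm
  · rw [cπ_self G e₀ w h]
    constructor
    · rintro rfl; exact Or.inl rfl
    · rintro (h1 | ⟨-, h2⟩)
      · exact Subtype.ext h1
      · exact absurd h2 h

theorem cσ_fiber_connected (hbet : BetCond G e₀) (u : (cNet G e₀ hbet).V) :
    Connected (fiber (cσ G e₀ hbet) u) := by
  have hw : G.src e₀ ≠ G.tgt e₀ := src_ne_tgt G e₀
  by_cases hu : u.val = G.src e₀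
  · have h1 : vmap (cσ G e₀ hbet) (G.src e₀) = u := by
      rw [cσ_vmap, cπ_self G e₀ _ hw]
      exact Subtype.ext hu.symm
    have h2 : vmap (cσ G e₀ hbet) (G.tgt e₀) = u := by
      rw [cσ_vmap, cπ_tgt]
      exact Subtype.ext hu.symm
    haveI : Nonempty ((fiber (cσ G e₀ hbet) u).V) := ⟨⟨G.src e₀, h1⟩⟩
    refine SimpleGraph.Connected.mk ?_
    have hadj := fiber_adj_of (cσ G e₀ hbet) e₀ (cσ_edge_multi G e₀ hbet e₀ ⟨rfl, rfl⟩)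
      h1 ⟨G.src e₀, h1⟩ ⟨G.tgt e₀, h2⟩ rfl rfl
    have hcase : ∀ z : (fiber (cσ G e₀ hbet) u).V,
        z = ⟨G.src e₀, h1⟩ ∨ z = ⟨G.tgt e₀, h2⟩ := by
      intro z
      have hz : cπ G e₀ z.val = u := z.2
      rcases (cπ_eq_iff G e₀ z.val u).mp hz with h | ⟨-, h⟩
      · exact Or.inl (Subtype.ext (h.trans hu))
      · exact Or.inr (Subtype.ext h)
    intro x y
    rcases hcase x with rfl | rfl <;> rcases hcase y with rfl | rfl
    exacts [SimpleGraph.Reachable.refl _, hadj.reachable, hadj.symm.reachable,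
      SimpleGraph.Reachable.refl _]
  · have h1 : vmap (cσ G e₀ hbet) u.val = u := by
      rw [cσ_vmap]
      exact (cπ_eq_iff G e₀ u.val u).mpr (Or.inl rfl)
    haveI : Nonempty ((fiber (cσ G e₀ hbet) u).V) := ⟨⟨u.val, h1⟩⟩
    refine SimpleGraph.Connected.mk ?_
    intro x y
    have hx : x = y := by
      have hxv : cπ G e₀ x.val = u := x.2
      have hyv : cπ G e₀ y.val = u := y.2
      rcases (cπ_eq_iff G e₀ x.val u).mp hxv with h | ⟨h, -⟩
      · rcases (cπ_eq_iff G e₀ y.val u).mp hyv with h' | ⟨h', -⟩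
        · exact Subtype.ext (h.trans h'.symm)
        · exact absurd h' hu
      · exact absurd h hu
    rw [hx]

theorem cσ_simple (hbet : BetCond G e₀) : IsSimpleContraction (cσ G e₀ hbet) := by
  have hw : G.src e₀ ≠ G.tgt e₀ := src_ne_tgt G e₀
  have hMe : ∀ e : G.E, IsContractionEdge (cσ G e₀ hbet) e ↔ IsMultiE G e₀ e := by
    intro e
    constructor
    · intro hc
      by_contra hm
      have := cσ_edge_not_multi G e₀ hbet e hm
      unfold MapsToEdge at this
      rw [isContractionEdge_iff_pathEdges, this] at hc
      exact List.cons_ne_nil _ _ hc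
    · exact cσ_edge_multi G e₀ hbet e
  constructor
  · refine ⟨⟨⟨⟨?_, ?_⟩, ?_⟩, ?_⟩, cσ_fiber_connected G e₀ hbet⟩
    · intro u
      exact ⟨u.val, cπ_self G e₀ u.val u.2⟩
    · intro k
      exact ⟨k.val, cσ_edge_not_multi G e₀ hbet k.val k.2⟩
    · intro e hsub
      by_cases h : IsMultiE G e₀ e
      · have := cσ_edge_multi G e₀ hbet e h
        rw [IsContractionEdge] at this
        rw [IsSubdivisionEdge, this] at hsub
        omega
      · have := cσ_edge_not_multi G e₀ hbet e h
        unfold MapsToEdge at this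
        rw [IsSubdivisionEdge, ← length_pathEdges, this] at hsub
        exact Nat.lt_irrefl 1 hsub
    · intro k e₁ e₂ h1 h2
      rw [mapsToEdge_iff_pathEdges] at h1 h2
      by_cases hm1 : IsMultiE G e₀ e₁
      · rw [isContractionEdge_iff_pathEdges.mp (cσ_edge_multi G e₀ hbet e₁ hm1)] at h1
        simp at h1
      by_cases hm2 : IsMultiE G e₀ e₂
      · rw [isContractionEdge_iff_pathEdges.mp (cσ_edge_multi G e₀ hbet e₂ hm2)] at h2
        simp at h2
      have c1 := cσ_edge_not_multi G e₀ hbet e₁ hm1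
      have c2 := cσ_edge_not_multi G e₀ hbet e₂ hm2
      unfold MapsToEdge at c1 c2
      rw [c1] at h1
      rw [c2] at h2
      have k1 : (⟨e₁, hm1⟩ : cE G e₀) = k := (List.cons.inj h1).1
      have k2 : (⟨e₂, hm2⟩ : cE G e₀) = k := (List.cons.inj h2).1
      have := k1.trans k2.symm
      exact congrArg Subtype.val this
  · refine ⟨G.src e₀, G.tgt e₀, hw, ?_, ⟨e₀, rfl, rfl⟩, hMe, ?_⟩
    · rw [cσ_vmap, cσ_vmap, cπ_tgt, cπ_self G e₀ _ hw]
    · intro u u' h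
      rw [cσ_vmap, cσ_vmap] at h
      rcases cπ_val_eq_or G e₀ u with h1 | ⟨h1, h1'⟩ <;>
        rcases cπ_val_eq_or G e₀ u' with h2 | ⟨h2, h2'⟩
      · exact Or.inl (h1.symm.trans ((congrArg Subtype.val h).trans h2))
      · refine Or.inr ⟨Or.inl ?_, Or.inr h2⟩
        rw [← h1, h, h2']
      · refine Or.inr ⟨Or.inr h1, Or.inl ?_⟩
        rw [← h2, ← h, h1']
      · exact Or.inl (h1.trans h2.symm)
end Contr2
section Rho

open Quiver Classical

variable {H : CausalNet} (G : CausalNet) (e₀ : G.E)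

theorem path_eq_eqToHom {a b : H.V} (p : pobj a ⟶ pobj b)
    (h : Quiver.Path.length (V := H.V) p = 0) :
    p = eqToHom (congrArg (pobj (G := H)) (Quiver.Path.eq_of_length_zero p h)) := by
  have hab : a = b := Quiver.Path.eq_of_length_zero p h
  subst hab
  change Quiver.Path a a at p
  cases p with
  | nil => rfl
  | cons q g => simp [Quiver.Path.length] at h

theorem vcπ (lam : G ⟶ H) (hvw : vmap lam (G.src e₀) = vmap lam (G.tgt e₀)) (x : G.V) :
    vmap lam ((cπ G e₀ x).val) = vmap lam x := by
  rcases cπ_val_eq_or G e₀ x with h | ⟨h1, h2⟩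
  · rw [h]
  · rw [h2, h1]; exact hvw

/-- The prefunctor underlying the induced morphism out of the contracted net. -/
noncomputable def cρΦ (lam : G ⟶ H) (hvw : vmap lam (G.src e₀) = vmap lam (G.tgt e₀))
    (hbet : BetCond G e₀) : (cNet G e₀ hbet).V ⥤q Paths H.V where
  obj u := pobj (G := H) (vmap lam u.val)
  map {u u'} k :=
    eqToHom ((congrArg (fun z : cV G e₀ => pobj (G := H) (vmap lam z.val)) k.2.1.symm).trans
      (congrArg (pobj (G := H)) (vcπ G e₀ lam hvw (G.src k.val.val)))) ≫
    (edgePath lam k.val.val :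
      pobj (G := H) (vmap lam (G.src k.val.val)) ⟶ pobj (G := H) (vmap lam (G.tgt k.val.val))) ≫
    eqToHom ((congrArg (pobj (G := H)) (vcπ G e₀ lam hvw (G.tgt k.val.val))).symm.trans
      (congrArg (fun z : cV G e₀ => pobj (G := H) (vmap lam z.val)) k.2.2))

/-- The induced morphism out of the contracted net. -/
noncomputable def cρ (lam : G ⟶ H) (hvw : vmap lam (G.src e₀) = vmap lam (G.tgt e₀))
    (hbet : BetCond G e₀) : cNet G e₀ hbet ⟶ H :=
  Paths.lift (cρΦ G e₀ lam hvw hbet)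

theorem factor (lam : G ⟶ H) (hvw : vmap lam (G.src e₀) = vmap lam (G.tgt e₀))
    (hbet : BetCond G e₀) (hmc : ∀ e, IsMultiE G e₀ e → IsContractionEdge lam e) :
    cσ G e₀ hbet ≫ cρ G e₀ lam hvw hbet = lam := by
  apply Paths.ext_functor
  case h_obj =>
    funext v
    show vmap lam ((cπ G e₀ v).val) = vmap lam v
    exact vcπ G e₀ lam hvw v
  intro a b f
  induction f using hom_elim with
  | h e =>
    show (cρ G e₀ lam hvw hbet).map ((cσ G e₀ hbet).map (Quiver.Hom.toPath (edgeHom G e))) = _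
    rw [show (cσ G e₀ hbet).map (Quiver.Hom.toPath (edgeHom G e)) =
      (cσΦ G e₀ hbet).map (edgeHom G e) from Paths.lift_toPath _ _]
    by_cases h : IsMultiE G e₀ e
    · have hc : IsContractionEdge lam e := hmc e h
      have hR : lam.map (Quiver.Hom.toPath (edgeHom G e)) =
          eqToHom (congrArg (pobj (G := H))
            (Quiver.Path.eq_of_length_zero (edgePath lam e) hc)) :=
        path_eq_eqToHom (edgePath lam e) hc
      rw [hR]
      dsimp only [cσΦ, homEdge, edgeHom]
      erw [dif_pos h, eqToHom_map]
      exact eqToHom_eq_three _ _ _ _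
    · dsimp only [cσΦ, homEdge, edgeHom]
      erw [dif_neg h]
      erw [Functor.map_comp, Functor.map_comp, eqToHom_map, eqToHom_map]
      erw [show (cρ G e₀ lam hvw hbet).map
          (phom (G := cNet G e₀ hbet) (⟨e, h⟩ : cE G e₀)) =
        (cρΦ G e₀ lam hvw hbet).map (edgeHom (cNet G e₀ hbet) ⟨e, h⟩) from
          Paths.lift_toPath _ _]
      dsimp only [cρΦ]
      exact conj_path_eq _ _ _ _ _ _ _

end Rho

theorem contraction_comp_of (n : ℕ) : ∀ (G H : CausalNet) (lam : G ⟶ H),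
    Fintype.card G.V = n → IsContractionMor lam →
    IsCompOf IsoOrSimpleContraction lam := by
  induction n using Nat.strong_induction_on with
  | _ n IH =>
  intro G H lam hcard hlam
  by_cases hce : ∃ e : G.E, IsContractionEdge lam e
  · classical
    set S : G.E → Set G.V :=
      fun e => {x | Reaches G (G.src e) x ∧ Reaches G x (G.tgt e)} with hS
    obtain ⟨e₁, he₁⟩ := hce
    obtain ⟨e₀, hmem, hm⟩ := Finset.exists_min_image
      (Finset.univ.filter fun e => IsContractionEdge lam e) (fun e => (S e).ncard)
      ⟨e₁, by simp [he₁]⟩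
    have he₀ : IsContractionEdge lam e₀ := by simpa using hmem
    have hmin : ∀ e, IsContractionEdge lam e → (S e₀).ncard ≤ (S e).ncard :=
      fun e he => hm e (by simp [he])
    have hvw : vmap lam (G.src e₀) = vmap lam (G.tgt e₀) := he₀.endpoints_eq
    have hbet : BetCond G e₀ := by
      intro x h1 h2
      by_contra hx
      push_neg at hx
      obtain ⟨hx1, hx2⟩ := hx
      obtain ⟨p⟩ := h1
      have hp : 0 < p.length := by
        rcases Nat.eq_zero_or_pos p.length with h0 | h
        · exact absurd (Quiver.Path.eq_of_length_zero p h0).symm hx1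
        · exact h
      obtain ⟨f, hs1, hr1⟩ := exists_first_edge p hp
      have hyw₂ : Reaches G (G.tgt f) (G.tgt e₀) := hr1.trans h2
      have hcon : IsContractionEdge lam f :=
        contraction_edge_of_sandwich lam f (G.tgt e₀) hyw₂ (by rw [hs1]; exact hvw)
      have hy2 : G.tgt f ≠ G.tgt e₀ := by
        intro hy
        exact hx2 (Reaches.antisymm h2 (hy ▸ hr1))
      have hsub : S f ⊆ S e₀ := by
        rintro z ⟨hz1, hz2⟩
        exact ⟨hs1 ▸ hz1, hz2.trans hyw₂⟩
      have hmem2 : G.tgt e₀ ∈ S e₀ := ⟨reaches_of_edge G e₀, Reaches.refl G _⟩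
      have hnm : G.tgt e₀ ∉ S f := by
        rintro ⟨-, hz2⟩
        exact hy2 (Reaches.antisymm hyw₂ hz2)
      have hlt : (S f).ncard < (S e₀).ncard :=
        Set.ncard_lt_ncard ⟨hsub, fun hss => hnm (hss hmem2)⟩ (Set.toFinite _)
      have := hmin f hcon
      omega
    have hmc : ∀ e, IsMultiE G e₀ e → IsContractionEdge lam e := by
      intro e hme
      refine contraction_edge_of_sandwich lam e (G.tgt e₀) ?_ ?_
      · rw [hme.2]; exact Reaches.refl G _
      · rw [hme.1]; exact hvw
    have hfac := factor G e₀ lam hvw hbet hmc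
    have hσ := cσ_simple G e₀ hbet
    have hρ : IsContractionMor (cρ G e₀ lam hvw hbet) :=
      cancel_contractionMor hσ.1.1.1 (by rw [hfac]; exact hlam)
    rw [← hfac]
    refine IsCompOf.comp _ _ (IsCompOf.of _ (Or.inr hσ)) ?_
    exact IH (Fintype.card (cNet G e₀ hbet).V) (hcard ▸ card_cV_lt G e₀ hbet) _ _ _ rfl hρ
  · push_neg at hce
    exact IsCompOf.of lam (Or.inl (isIso_of_no_contraction lam hlam hce))
theorem contraction_iff_comp_of_simple {G H : CausalNet} (lam : G ⟶ H) :
    IsContractionMor lam ↔ IsCompOf IsoOrSimpleContraction lam := by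
  constructor
  · intro h
    exact contraction_comp_of (Fintype.card G.V) G H lam rfl h
  · intro h
    induction h with
    | of φ hφ =>
      rcases hφ with h | h
      · exact iso_isContractionMor φ h
      · exact h.1
    | comp φ ψ hφ hψ ihφ ihψ => exact comp_contractionMor ihφ ihψ

end CausalNets
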